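/- Suppose the dataset (H, Ẋ, Λ) is generated by a true system Δ_r and satisfies HΛH⊤ ≻ 0. Then F_e⊤ E_e^{−1} F_e − G_e ≻ 0; consequently the set {Δ⊤ : Δ ∈ C(H, Ẋ, Λ)} ⊆ ℝ^{n_h×n_x} is a matrix ellipsoid with parameters E = E_e, F = F_e, G = G_e. -/

import Mathlib

open Matrix

/-- The set of admissible systems
`C(H, Ẋ, Λ) := {Δ : Δ E_e Δᵀ + Δ F_e + F_eᵀ Δᵀ + G_e ⪯ 0}` with
`E_e = HΛHᵀ`, `F_e = −HΛẊᵀ`, `G_e = ẊΛẊᵀ − tr(Λ)δ I`. -/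
def admisSet (n_x n_h : ℕ) {k : Type*} [Fintype k] (δ : ℝ)
    (H : Matrix (Fin n_h) k ℝ) (Xd : Matrix (Fin n_x) k ℝ) (Λ : Matrix k k ℝ) :
    Set (Matrix (Fin n_x) (Fin n_h) ℝ) :=
  {Δ | (-(Δ * (H * Λ * Hᵀ) * Δᵀ + Δ * (-(H * Λ * Xdᵀ)) + (-(H * Λ * Xdᵀ))ᵀ * Δᵀ +
      (Xd * Λ * Xdᵀ - (Matrix.trace Λ * δ) • 1))).PosSemidef}

/-- Completion of squares. -/
lemma stmt7_aux_sq (m p : ℕ) (E : Matrix (Fin p) (Fin p) ℝ) (F : Matrix (Fin p) (Fin m) ℝ)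
    (Δ : Matrix (Fin m) (Fin p) ℝ) (hEs : Eᵀ = E) (hdet : IsUnit E.det) :
    (Δᵀ + E⁻¹ * F)ᵀ * E * (Δᵀ + E⁻¹ * F) = Δ * E * Δᵀ + Δ * F + Fᵀ * Δᵀ + Fᵀ * E⁻¹ * F := by
  have hE2 : E * E⁻¹ = 1 := Matrix.mul_nonsing_inv _ hdet
  have hE1 : E⁻¹ * E = 1 := Matrix.nonsing_inv_mul _ hdet
  have hEi : (E⁻¹)ᵀ = E⁻¹ := by rw [Matrix.transpose_nonsing_inv, hEs]
  have h1 : ∀ (Z : Matrix (Fin p) (Fin m) ℝ), E * (E⁻¹ * Z) = Z := fun Z => by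
    rw [← Matrix.mul_assoc, hE2, Matrix.one_mul]
  have h2 : ∀ (Z : Matrix (Fin p) (Fin m) ℝ), E⁻¹ * (E * Z) = Z := fun Z => by
    rw [← Matrix.mul_assoc, hE1, Matrix.one_mul]
  simp only [Matrix.transpose_add, Matrix.transpose_mul, Matrix.transpose_transpose, hEi,
    Matrix.add_mul, Matrix.mul_add, Matrix.mul_assoc, h1, h2]
  abel

/-- Value of the ellipsoid map at the true system. -/
lemma stmt7_aux_cancel (m p q : ℕ) (H : Matrix (Fin p) (Fin q) ℝ) (D : Matrix (Fin q) (Fin q) ℝ)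
    (hDs : Dᵀ = D) (Δ : Matrix (Fin m) (Fin p) ℝ) (W : Matrix (Fin m) (Fin q) ℝ) (c : ℝ) :
    Δ * (H * D * Hᵀ) * Δᵀ + Δ * (-(H * D * (Δ * H + W)ᵀ)) + (-(H * D * (Δ * H + W)ᵀ))ᵀ * Δᵀ +
      ((Δ * H + W) * D * (Δ * H + W)ᵀ - c • 1) = W * D * Wᵀ - c • 1 := by
  simp only [Matrix.transpose_add, Matrix.transpose_mul, Matrix.transpose_neg,
    Matrix.transpose_transpose, hDs, Matrix.add_mul, Matrix.mul_add, Matrix.mul_neg,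
    Matrix.neg_mul, Matrix.mul_assoc]
  abel

/-- `tr(Λ)δ I − WΛWᵀ ≻ 0` when the columns of `W` have squared norm `< δ` and
some weight is positive. -/
lemma stmt7_aux_pd (m q : ℕ) (δ : ℝ) (l : Fin q → ℝ) (hl : ∀ i, 0 ≤ l i)
    (W : Matrix (Fin m) (Fin q) ℝ) (hW : ∀ j, (∑ i, (W i j) ^ 2) < δ)
    (j0 : Fin q) (hj0 : 0 < l j0) :
    ((Matrix.trace (Matrix.diagonal l) * δ) • (1 : Matrix (Fin m) (Fin m) ℝ)
      - W * Matrix.diagonal l * Wᵀ).PosDef := by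
  have hDpsd : (Matrix.diagonal l).PosSemidef := Matrix.posSemidef_diagonal_iff.mpr hl
  have hWDW : (W * Matrix.diagonal l * Wᵀ).PosSemidef := by
    simpa [Matrix.conjTranspose_eq_transpose_of_trivial] using
      hDpsd.mul_mul_conjTranspose_same W
  refine Matrix.PosDef.of_dotProduct_mulVec_pos ?_ ?_
  · refine Matrix.IsHermitian.sub ?_ hWDW.isHermitian
    simp [Matrix.IsHermitian]
  · intro x hx
    obtain ⟨i0, hi0⟩ : ∃ i, x i ≠ 0 := Function.ne_iff.mp hx
    set S : ℝ := ∑ i, (x i) ^ 2 with hS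
    have hSpos : 0 < S := Finset.sum_pos' (fun j _ => sq_nonneg _)
      ⟨i0, Finset.mem_univ i0, by positivity⟩
    have hxx : x ⬝ᵥ x = S := by simp [dotProduct, hS, sq]
    have quad : x ⬝ᵥ ((W * Matrix.diagonal l * Wᵀ) *ᵥ x)
        = ∑ j, l j * ((Wᵀ *ᵥ x) j) ^ 2 := by
      rw [← Matrix.mulVec_mulVec, ← Matrix.mulVec_mulVec, Matrix.dotProduct_mulVec,
        ← Matrix.mulVec_transpose]
      simp only [Matrix.mulVec_diagonal, dotProduct]
      exact Finset.sum_congr rfl fun j _ => by ring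
    have hbound : ∀ j, l j * ((Wᵀ *ᵥ x) j) ^ 2 ≤ l j * ((∑ i, (W i j) ^ 2) * S) := by
      intro j
      refine mul_le_mul_of_nonneg_left ?_ (hl j)
      have := Finset.sum_mul_sq_le_sq_mul_sq Finset.univ (fun i => W i j) x
      simpa [Matrix.mulVec, dotProduct, Matrix.transpose_apply, hS] using this
    have hlt : ∑ j, l j * ((Wᵀ *ᵥ x) j) ^ 2 < ∑ j, l j * (δ * S) := by
      refine Finset.sum_lt_sum (fun j _ => ?_) ⟨j0, Finset.mem_univ j0, ?_⟩
      · refine (hbound j).trans ?_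
        refine mul_le_mul_of_nonneg_left ?_ (hl j)
        exact mul_le_mul_of_nonneg_right (hW j).le hSpos.le
      · refine lt_of_le_of_lt (hbound j0) ?_
        exact mul_lt_mul_of_pos_left (mul_lt_mul_of_pos_right (hW j0) hSpos) hj0
    have htr : ∑ j, l j * (δ * S) = Matrix.trace (Matrix.diagonal l) * δ * S := by
      rw [Matrix.trace_diagonal, Finset.sum_mul, Finset.sum_mul]
      exact Finset.sum_congr rfl fun j _ => by ring
    simp only [Matrix.sub_mulVec, dotProduct_sub, Matrix.smul_mulVec,
      Matrix.one_mulVec, dotProduct_smul, star_trivial]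
    rw [quad, hxx, smul_eq_mul]
    linarith [htr ▸ hlt]

/-- If the dataset is generated by a true system `Δ_r` (i.e.
`Ẋ = Δ_r H + W` with columns of `W` of squared norm `< δ`) and `HΛHᵀ ≻ 0`, then
`F_eᵀ E_e⁻¹ F_e − G_e ≻ 0`; consequently `{Δᵀ : Δ ∈ C(H,Ẋ,Λ)}` is a matrix ellipsoid
with parameters `E = E_e ≻ 0`, `F = F_e`, `G = G_e`. -/
theorem stmt7 (n_x n_u n : ℕ) (hx : 0 < n_x) (hu : 0 < n_u) (hn : 0 < n)
    (δ : ℝ) (hδ : 0 < δ)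
    (H : Matrix (Fin (n_x + n_u)) (Fin n) ℝ) (Xd : Matrix (Fin n_x) (Fin n) ℝ)
    (l : Fin n → ℝ) (hl : ∀ i, 0 ≤ l i)
    (Δr : Matrix (Fin n_x) (Fin (n_x + n_u)) ℝ) (W : Matrix (Fin n_x) (Fin n) ℝ)
    (hgen : Xd = Δr * H + W) (hW : ∀ j, (∑ i, (W i j) ^ 2) < δ)
    (hpd : (H * Matrix.diagonal l * Hᵀ).PosDef) :
    ((-(H * Matrix.diagonal l * Xdᵀ))ᵀ * (H * Matrix.diagonal l * Hᵀ)⁻¹ *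
        (-(H * Matrix.diagonal l * Xdᵀ)) -
      (Xd * Matrix.diagonal l * Xdᵀ -
        (Matrix.trace (Matrix.diagonal l) * δ) • 1)).PosDef ∧
    (fun Δ => Δᵀ) '' admisSet n_x (n_x + n_u) δ H Xd (Matrix.diagonal l) =
      {Z : Matrix (Fin (n_x + n_u)) (Fin n_x) ℝ |
        (-(Zᵀ * (H * Matrix.diagonal l * Hᵀ) * Z + Zᵀ * (-(H * Matrix.diagonal l * Xdᵀ)) +
          (-(H * Matrix.diagonal l * Xdᵀ))ᵀ * Z +
          (Xd * Matrix.diagonal l * Xdᵀ -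
            (Matrix.trace (Matrix.diagonal l) * δ) • 1))).PosSemidef} := by
  constructor
  · -- F_eᵀ E_e⁻¹ F_e − G_e ≻ 0
    subst hgen
    set D := Matrix.diagonal l with hD
    set E := H * D * Hᵀ with hE
    set F := -(H * D * (Δr * H + W)ᵀ) with hF
    set c := Matrix.trace D * δ with hc
    -- some weight is positive
    obtain ⟨j0, hj0⟩ : ∃ j, 0 < l j := by
      by_contra hcon
      push_neg at hcon
      have hl0 : l = 0 := funext fun j => le_antisymm (hcon j) (hl j)
      have hd0 : D = 0 := by
        ext i j
        simp [hD, Matrix.diagonal_apply, hl0]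
      have h0 : E = 0 := by rw [hE, hd0, Matrix.mul_zero, Matrix.zero_mul]
      have hx1 : (fun _ => (1 : ℝ) : Fin (n_x + n_u) → ℝ) ≠ 0 := by
        intro h
        have := congrFun h ⟨0, by omega⟩
        simp at this
      have := hpd.dotProduct_mulVec_pos hx1
      rw [h0] at this
      simp at this
    have hEs : Eᵀ = E := by
      simp [hE, hD, Matrix.transpose_mul, Matrix.mul_assoc]
    have hdet : IsUnit E.det := isUnit_iff_ne_zero.mpr hpd.det_pos.ne'
    have hsq := stmt7_aux_sq n_x (n_x + n_u) E F Δr hEs hdet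
    have hcan := stmt7_aux_cancel n_x (n_x + n_u) n H D (by simp [hD]) Δr W c
    have key : Fᵀ * E⁻¹ * F - ((Δr * H + W) * D * (Δr * H + W)ᵀ - c • 1)
        = (Δrᵀ + E⁻¹ * F)ᵀ * E * (Δrᵀ + E⁻¹ * F) + (c • 1 - W * D * Wᵀ) := by
      calc Fᵀ * E⁻¹ * F - ((Δr * H + W) * D * (Δr * H + W)ᵀ - c • 1)
          = (Δr * E * Δrᵀ + Δr * F + Fᵀ * Δrᵀ + Fᵀ * E⁻¹ * F)
            - (Δr * E * Δrᵀ + Δr * F + Fᵀ * Δrᵀ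
              + ((Δr * H + W) * D * (Δr * H + W)ᵀ - c • 1)) := by abel
        _ = (Δrᵀ + E⁻¹ * F)ᵀ * E * (Δrᵀ + E⁻¹ * F) - (W * D * Wᵀ - c • 1) := by
            rw [← hsq, hcan]
        _ = (Δrᵀ + E⁻¹ * F)ᵀ * E * (Δrᵀ + E⁻¹ * F) + (c • 1 - W * D * Wᵀ) := by abel
    rw [key]
    have hBEB : ((Δrᵀ + E⁻¹ * F)ᵀ * E * (Δrᵀ + E⁻¹ * F)).PosSemidef := by
      simpa [Matrix.conjTranspose_eq_transpose_of_trivial] using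
        hpd.posSemidef.conjTranspose_mul_mul_same (Δrᵀ + E⁻¹ * F)
    exact Matrix.PosDef.posSemidef_add hBEB
      (stmt7_aux_pd n_x n δ l hl W hW j0 hj0)
  · -- image description
    ext Z
    simp only [Set.mem_image, Set.mem_setOf_eq, admisSet]
    constructor
    · rintro ⟨Δ, hΔ, rfl⟩
      simpa [Matrix.transpose_transpose] using hΔ
    · intro hZ
      exact ⟨Zᵀ, by simpa [Matrix.transpose_transpose] using hZ, by simp⟩
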